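/- arXiv:1910.12958 — 7 statements merged into one kernel-verified Lean document; each statement's English description precedes it below -/
import Mathlib

section
/- Let h: ℝ → ℝ ∪ {+∞} be a proper convex l.s.c. function such that h is non-decreasing and diverges to +∞ at +∞ along its domain in the sense that the function q ↦ ε·exp((p-q)/ε) + h(q) is coercive for every p ∈ ℝ. Then for every ε > 0 and every p ∈ ℝ, there is a unique minimizer q of the map q ↦ ε·exp((p-q)/ε) + h(q); this defines the anisotropic proximity operator aprox_h^ε(p). -/
open Filter Topology

/-- For a proper convex l.s.c. non-decreasing `h : ℝ → ℝ ∪ {+∞}` such that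
`q ↦ ε·exp((p-q)/ε) + h(q)` is coercive for every `p`, this functional has a unique
minimizer for every `ε > 0` and `p ∈ ℝ`: this defines the anisotropic proximity
operator `aprox_h^ε(p)`. -/
theorem aprox_exists_unique (ε : ℝ) (hε : 0 < ε) (h : ℝ → EReal)
    (hproper : ∃ q, h q ≠ ⊤) (hnbot : ∀ q, h q ≠ ⊥)
    (hconv : ∀ p q : ℝ, ∀ t : ℝ, 0 ≤ t → t ≤ 1 →
      h (t * p + (1 - t) * q) ≤ (t : EReal) * h p + ((1 - t) : EReal) * h q)
    (hlsc : LowerSemicontinuous h) (hmono : Monotone h)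
    (hcoerc : ∀ p : ℝ,
      Tendsto (fun q : ℝ => ((ε * Real.exp ((p - q) / ε) : ℝ) : EReal) + h q)
        (cocompact ℝ) (𝓝 ⊤)) :
    ∀ p : ℝ, ∃! q : ℝ, ∀ r : ℝ,
      ((ε * Real.exp ((p - q) / ε) : ℝ) : EReal) + h q ≤
        ((ε * Real.exp ((p - r) / ε) : ℝ) : EReal) + h r := by
  intro p
  set g : ℝ → ℝ := fun q => ε * Real.exp ((p - q) / ε) with hg
  set F : ℝ → EReal := fun q => ((g q : ℝ) : EReal) + h q with hF
  obtain ⟨q₀, hq₀⟩ := hproper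
  have hFq₀top : F q₀ ≠ ⊤ := by
    obtain ⟨c, hc⟩ : ∃ c : ℝ, h q₀ = (c : EReal) :=
      ⟨(h q₀).toReal, (EReal.coe_toReal hq₀ (hnbot q₀)).symm⟩
    simp only [hF, hc, ← EReal.coe_add]
    exact EReal.coe_ne_top _
  -- F is lower semicontinuous
  have hgc : Continuous fun q => ((g q : ℝ) : EReal) := by
    apply continuous_coe_real_ereal.comp
    continuity
  have hFlsc : LowerSemicontinuous F :=
    hgc.lowerSemicontinuous.add' hlsc (fun x =>
      EReal.continuousAt_add (Or.inl (by simp)) (Or.inl (by simp)))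
  -- find a compact set K outside of which F > F q₀
  have hmem : {q : ℝ | F q₀ < F q} ∈ cocompact ℝ := by
    have := (hcoerc p) (Ioi_mem_nhds (lt_top_iff_ne_top.mpr hFq₀top))
    exact this
  obtain ⟨K, hKcomp, hKsub⟩ := mem_cocompact.mp hmem
  have hq₀K : q₀ ∈ K := by
    by_contra hq
    have := hKsub hq
    simp only [Set.mem_setOf_eq] at this
    exact lt_irrefl _ this
  -- minimize F on K using lsc + compactness
  have hSne : (F '' K).Nonempty := ⟨F q₀, q₀, hq₀K, rfl⟩
  obtain ⟨u, -, hutend, humem⟩ := exists_seq_tendsto_sInf hSne (OrderBot.bddBelow _)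
  choose v hvK hvF using humem
  obtain ⟨x, hxK, φ, hφmono, hφtend⟩ := hKcomp.tendsto_subseq hvK
  have hxmin : ∀ r ∈ K, F x ≤ F r := by
    have hFx : F x ≤ sInf (F '' K) := by
      by_contra hc
      push_neg at hc
      obtain ⟨c, hc1, hc2⟩ := exists_between hc
      have hev := (hFlsc x) _ hc2
      have hev2 : ∀ᶠ n in atTop, c < F (v (φ n)) := hφtend.eventually hev
      have htend2 : Tendsto (fun n => F (v (φ n))) atTop (𝓝 (sInf (F '' K))) := by
        have heq : (fun n => F (v (φ n))) = u ∘ φ := by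
          funext n; rw [hvF]; rfl
        rw [heq]
        exact hutend.comp hφmono.tendsto_atTop
      have hev3 := htend2.eventually_lt_const hc1
      obtain ⟨n, h1, h2⟩ := (hev2.and hev3).exists
      exact absurd h2 (not_lt.mpr h1.le)
    intro r hr
    exact hFx.trans (csInf_le (OrderBot.bddBelow _) ⟨r, hr, rfl⟩)
  have hxglobal : ∀ r, F x ≤ F r := by
    intro r
    by_cases hr : r ∈ K
    · exact hxmin r hr
    · exact (hxmin q₀ hq₀K).trans (le_of_lt (hKsub hr))
  refine ⟨x, hxglobal, ?_⟩
  -- uniqueness via strict convexity of exp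
  intro y hy
  by_contra hne
  have hFeq : F y = F x := le_antisymm (hy x) (hxglobal y)
  have hFytop : F y ≠ ⊤ := hFeq ▸ (fun hc => hFq₀top (top_le_iff.mp (hc ▸ hxglobal q₀)))
  have hhytop : h y ≠ ⊤ := by
    intro hc
    apply hFytop
    simp only [hF, hc]
    exact EReal.add_top_of_ne_bot (by simp)
  have hhxtop : h x ≠ ⊤ := by
    intro hc
    apply hFq₀top
    apply top_le_iff.mp
    calc (⊤ : EReal) = F x := by
          simp only [hF, hc]; exact (EReal.add_top_of_ne_bot (by simp)).symm
      _ ≤ F q₀ := hxglobal q₀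
  set a : ℝ := (h y).toReal with ha
  set b : ℝ := (h x).toReal with hb
  have hhy : h y = (a : EReal) := (EReal.coe_toReal hhytop (hnbot y)).symm
  have hhx : h x = (b : EReal) := (EReal.coe_toReal hhxtop (hnbot x)).symm
  have hsum : g y + a = g x + b := by
    have : ((g y + a : ℝ) : EReal) = ((g x + b : ℝ) : EReal) := by
      push_cast
      rw [← hhy, ← hhx]
      exact hFeq
    exact_mod_cast this
  set m : ℝ := (1/2 : ℝ) * y + (1 - 1/2) * x with hm
  have hmidconv : h m ≤ (((a + b) / 2 : ℝ) : EReal) := by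
    have := hconv y x (1/2) (by norm_num) (by norm_num)
    rw [hhy, hhx] at this
    calc h m ≤ ((1/2 : ℝ) : EReal) * (a : EReal) + (((1 - 1/2 : ℝ)) : EReal) * (b : EReal) :=
          this
      _ = (((a + b) / 2 : ℝ) : EReal) := by
          norm_cast
          ring
  have hgstrict : g m < (g y + g x) / 2 := by
    have hxy : (p - y) / ε ≠ (p - x) / ε := by
      intro hc
      apply hne
      have hε' : ε ≠ 0 := ne_of_gt hε
      field_simp at hc
      linarith
    have := strictConvexOn_exp.2 (Set.mem_univ ((p - y) / ε)) (Set.mem_univ ((p - x) / ε))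
      hxy (by norm_num : (0:ℝ) < 1/2) (by norm_num : (0:ℝ) < 1/2) (by norm_num)
    have harg : (p - m) / ε = (1/2 : ℝ) • ((p - y) / ε) + (1/2 : ℝ) • ((p - x) / ε) := by
      simp only [smul_eq_mul, hm]
      field_simp
      ring
    simp only [hg]
    rw [harg]
    calc ε * Real.exp ((1/2 : ℝ) • ((p - y) / ε) + (1/2 : ℝ) • ((p - x) / ε))
        < ε * ((1/2 : ℝ) • Real.exp ((p - y) / ε) + (1/2 : ℝ) • Real.exp ((p - x) / ε)) := by
          exact mul_lt_mul_of_pos_left this hε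
      _ = (ε * Real.exp ((p - y) / ε) + ε * Real.exp ((p - x) / ε)) / 2 := by
          simp only [smul_eq_mul]; ring
  have hFm : F m < F y := by
    calc F m = ((g m : ℝ) : EReal) + h m := rfl
      _ ≤ ((g m : ℝ) : EReal) + (((a + b) / 2 : ℝ) : EReal) := by
          exact add_le_add le_rfl hmidconv
      _ = ((g m + (a + b) / 2 : ℝ) : EReal) := by norm_cast
      _ < ((g y + a : ℝ) : EReal) := by
          apply EReal.coe_lt_coe_iff.mpr
          have : g y + a = ((g y + a) + (g x + b)) / 2 := by rw [← hsum]; ring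
          rw [this]
          linarith [hgstrict]
      _ = F y := by simp only [hF, hhy]; norm_cast
  exact absurd (hy m) (not_le.mpr hFm)
end

section
/- For the anisotropic proximity operator, there holds aprox_{φ*}^ε(p) = ε · aprox_{(φ/ε)*}(p/ε), where aprox without superscript denotes the operator with ε = 1 and (φ/ε)* is the Legendre conjugate of φ/ε. -/
open Filter Topology

/-- Legendre conjugate of an entropy function: `φ*(q) = sup_{p ≥ 0} (p*q - φ(p))`. -/
noncomputable def entConj (φ : ℝ → EReal) (q : ℝ) : EReal :=
  ⨆ p : {p : ℝ // 0 ≤ p}, (((p.1 * q : ℝ) : EReal) - φ p.1)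

/-- An entropy function: nonnegative, convex, lower semicontinuous, `φ(1) = 0`,
and `φ(p) = +∞` for `p < 0`. -/
def IsEntropy (φ : ℝ → EReal) : Prop :=
  (∀ p, 0 ≤ φ p) ∧ φ 1 = 0 ∧ (∀ p < (0 : ℝ), φ p = ⊤) ∧
  LowerSemicontinuous φ ∧
  (∀ p q : ℝ, ∀ t : ℝ, 0 ≤ t → t ≤ 1 →
    φ (t * p + (1 - t) * q) ≤ (t : EReal) * φ p + ((1 - t) : EReal) * φ q)

lemma mulA (c : ℝ) (hc : 0 < c) (a : ℝ) (b : EReal) :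
    (c : EReal) * ((a : EReal) + b) = ((c * a : ℝ) : EReal) + (c : EReal) * b := by
  induction b with
  | bot =>
    rw [EReal.mul_bot_of_pos (by exact_mod_cast hc)]
    simp [EReal.add_bot]
    rw [EReal.mul_bot_of_pos (by exact_mod_cast hc)]
  | coe b => norm_cast; ring
  | top =>
    rw [EReal.add_top_of_ne_bot (EReal.coe_ne_bot a),
      EReal.mul_top_of_pos (by exact_mod_cast hc),
      EReal.add_top_of_ne_bot (EReal.coe_ne_bot _)]

lemma mul_iSupA {ι : Sort*} [Nonempty ι] (c : ℝ) (hc : 0 < c) (f : ι → EReal) :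
    (c : EReal) * (⨆ i, f i) = ⨆ i, (c : EReal) * f i := by
  have hc' : (0:EReal) < (c:EReal) := by exact_mod_cast hc
  apply le_antisymm
  · have h1 : (⨆ i, f i) ≤ (⨆ i, (c : EReal) * f i) / (c:EReal) := by
      apply iSup_le; intro i
      rw [EReal.le_div_iff_mul_le hc' (EReal.coe_ne_top c), mul_comm]
      exact le_iSup (fun i => (c:EReal) * f i) i
    calc (c : EReal) * (⨆ i, f i) ≤ (c:EReal) * ((⨆ i, (c : EReal) * f i) / (c:EReal)) := by
          exact mul_le_mul_of_nonneg_left h1 hc'.le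
      _ = ⨆ i, (c : EReal) * f i := EReal.mul_div_cancel (EReal.coe_ne_bot c)
          (EReal.coe_ne_top c) (ne_of_gt hc')
  · apply iSup_le; intro i
    exact mul_le_mul_of_nonneg_left (le_iSup _ i) hc'.le

lemma mul_le_mul_left_iffA (c : ℝ) (hc : 0 < c) (a b : EReal) :
    (c:EReal) * a ≤ (c:EReal) * b ↔ a ≤ b := by
  constructor
  · intro h
    have := mul_le_mul_of_nonneg_left h
      (by exact_mod_cast (inv_pos.mpr hc).le : (0:EReal) ≤ ((c⁻¹:ℝ):EReal))
    rwa [← mul_assoc, ← mul_assoc, ← EReal.coe_mul, inv_mul_cancel₀ hc.ne',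
      EReal.coe_one, one_mul, one_mul] at this
  · intro h
    exact mul_le_mul_of_nonneg_left h (by exact_mod_cast hc.le)

lemma ineq_scaleA (c : ℝ) (hc : 0 < c) (x y : ℝ) (X Y : EReal) :
    ((x:EReal) + X ≤ (y:EReal) + Y) ↔
      (((c * x : ℝ):EReal) + (c:EReal) * X ≤ ((c * y : ℝ):EReal) + (c:EReal) * Y) := by
  rw [← mulA c hc, ← mulA c hc, mul_le_mul_left_iffA c hc]

lemma entConj_scaleA (φ : ℝ → EReal) (ε : ℝ) (hε : 0 < ε) (s : ℝ) :
    entConj (fun x => ((ε⁻¹ : ℝ) : EReal) * φ x) s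
      = ((ε⁻¹ : ℝ) : EReal) * entConj φ (ε * s) := by
  unfold entConj
  rw [mul_iSupA _ (inv_pos.mpr hε)]
  congr 1; ext ⟨p, hp⟩
  rw [sub_eq_add_neg, sub_eq_add_neg, mulA _ (inv_pos.mpr hε), mul_neg]
  congr 2
  field_simp

/-- Rescaling relation `aprox_{φ*}^ε(p) = ε · aprox_{(φ/ε)*}(p/ε)`:
`q` minimizes `r ↦ ε·exp((p-r)/ε) + φ*(r)` if and only if `q/ε` minimizes
`r ↦ exp(p/ε - r) + (φ/ε)*(r)` (the `ε = 1` problem for the conjugate of `φ/ε`). -/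
theorem aprox_rescale (φ : ℝ → EReal) (hφ : IsEntropy φ) (ε : ℝ) (hε : 0 < ε)
    (p q : ℝ) :
    (∀ r : ℝ,
      ((ε * Real.exp ((p - q) / ε) : ℝ) : EReal) + entConj φ q ≤
        ((ε * Real.exp ((p - r) / ε) : ℝ) : EReal) + entConj φ r) ↔
    (∀ r : ℝ,
      ((Real.exp (p / ε - q / ε) : ℝ) : EReal)
          + entConj (fun x => ((ε⁻¹ : ℝ) : EReal) * φ x) (q / ε) ≤
        ((Real.exp (p / ε - r) : ℝ) : EReal)
          + entConj (fun x => ((ε⁻¹ : ℝ) : EReal) * φ x) r) := by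
  have hc := inv_pos.mpr hε
  have hq : ε * (q / ε) = q := mul_div_cancel₀ q hε.ne'
  constructor
  · intro h r
    have h' := (ineq_scaleA ε⁻¹ hc _ _ _ _).mp (h (ε * r))
    rw [entConj_scaleA φ ε hε, entConj_scaleA φ ε hε, hq]
    have e1 : ε⁻¹ * (ε * Real.exp ((p - q) / ε)) = Real.exp (p / ε - q / ε) := by
      rw [inv_mul_cancel_left₀ hε.ne', sub_div]
    have e2 : ε⁻¹ * (ε * Real.exp ((p - ε * r) / ε)) = Real.exp (p / ε - r) := by
      rw [inv_mul_cancel_left₀ hε.ne', sub_div, mul_div_cancel_left₀ r hε.ne']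
    rwa [e1, e2] at h'
  · intro h r
    have h' := h (r / ε)
    rw [entConj_scaleA φ ε hε, entConj_scaleA φ ε hε, hq,
      mul_div_cancel₀ r hε.ne'] at h'
    have h'' := (ineq_scaleA ε hε _ _ _ _).mp h'
    rw [← mul_assoc, ← EReal.coe_mul, mul_inv_cancel₀ hε.ne', EReal.coe_one, one_mul,
      ← mul_assoc, ← EReal.coe_mul, mul_inv_cancel₀ hε.ne', EReal.coe_one, one_mul] at h''
    have e1 : ε * Real.exp (p / ε - q / ε) = ε * Real.exp ((p - q) / ε) := by
      rw [sub_div]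
    have e2 : ε * Real.exp (p / ε - r / ε) = ε * Real.exp ((p - r) / ε) := by
      rw [sub_div]
    rwa [e1, e2] at h''
end

section
/- Suppose φ* is smooth (twice continuously differentiable) with φ*' > 0 and φ*'' ≥ 0, and let g(p) = aprox_{φ*}^ε(p) be defined implicitly by φ*'(g(p)) = exp((p - g(p))/ε). Then g is differentiable with g'(p) = φ*'(g(p)) / (φ*'(g(p)) + ε·φ*''(g(p))), and in particular 0 ≤ g'(p) ≤ 1, so g is non-decreasing and 1-Lipschitz. -/
open Filter Topology

/-- If `ψ = φ*` is `C²` with `ψ' > 0` and `ψ'' ≥ 0`, and `g(p) = aprox_{ψ}^ε(p)`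
is defined implicitly by `ψ'(g(p)) = exp((p - g(p))/ε)`, then `g` is differentiable
with `g'(p) = ψ'(g(p)) / (ψ'(g(p)) + ε·ψ''(g(p))) ∈ [0, 1]`; in particular `g` is
non-decreasing and 1-Lipschitz. -/
theorem aprox_deriv (ε : ℝ) (hε : 0 < ε) (ψ g : ℝ → ℝ)
    (hψ : ContDiff ℝ 2 ψ)
    (hψ' : ∀ x, 0 < deriv ψ x)
    (hψ'' : ∀ x, 0 ≤ deriv (deriv ψ) x)
    (hg : ∀ p, deriv ψ (g p) = Real.exp ((p - g p) / ε)) :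
    (∀ p, HasDerivAt g
        (deriv ψ (g p) / (deriv ψ (g p) + ε * deriv (deriv ψ) (g p))) p ∧
      0 ≤ deriv ψ (g p) / (deriv ψ (g p) + ε * deriv (deriv ψ) (g p)) ∧
      deriv ψ (g p) / (deriv ψ (g p) + ε * deriv (deriv ψ) (g p)) ≤ 1) ∧
    Monotone g ∧ LipschitzWith 1 g := by
  -- ψ' is differentiable
  have hd : Differentiable ℝ (deriv ψ) := by
    have h2 := (contDiff_succ_iff_deriv (n := 1)).mp (by exact_mod_cast hψ)
    exact h2.2.2.differentiable one_ne_zero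
  set F : ℝ → ℝ := fun q => q + ε * Real.log (deriv ψ q) with hFdef
  have hF : ∀ q, HasDerivAt F (1 + ε * (deriv (deriv ψ) q / deriv ψ q)) q := by
    intro q
    exact (hasDerivAt_id q).add ((((hd q).hasDerivAt).log (hψ' q).ne').const_mul ε)
  have hFpos : ∀ q, 0 < 1 + ε * (deriv (deriv ψ) q / deriv ψ q) := by
    intro q
    have : 0 ≤ ε * (deriv (deriv ψ) q / deriv ψ q) :=
      mul_nonneg hε.le (div_nonneg (hψ'' q) (hψ' q).le)
    linarith
  have hmono : StrictMono F := by
    apply strictMono_of_deriv_pos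
    intro q
    rw [(hF q).deriv]
    exact hFpos q
  have hFg : ∀ p, F (g p) = p := by
    intro p
    have := hg p
    have hlog : Real.log (deriv ψ (g p)) = (p - g p) / ε := by
      rw [this, Real.log_exp]
    simp only [hFdef, hlog]
    field_simp
    ring
  have hsurj : Function.Surjective F := fun p => ⟨g p, hFg p⟩
  set e : ℝ ≃o ℝ := StrictMono.orderIsoOfSurjective F hmono hsurj with he
  have heF : ∀ q, e q = F q := fun q => rfl
  have hge : ∀ p, g p = e.symm p := by
    intro p
    apply e.injective
    rw [e.apply_symm_apply, heF, hFg]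
  have hgcont : Continuous g := by
    have : g = ⇑e.symm := funext hge
    rw [this]
    exact e.symm.continuous
  have hmain : ∀ p, HasDerivAt g
      (deriv ψ (g p) / (deriv ψ (g p) + ε * deriv (deriv ψ) (g p))) p ∧
      0 ≤ deriv ψ (g p) / (deriv ψ (g p) + ε * deriv (deriv ψ) (g p)) ∧
      deriv ψ (g p) / (deriv ψ (g p) + ε * deriv (deriv ψ) (g p)) ≤ 1 := by
    intro p
    set a := deriv ψ (g p) with ha
    set b := deriv (deriv ψ) (g p) with hb
    have hapos : 0 < a := hψ' _
    have hbnn : 0 ≤ b := hψ'' _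
    have hdenpos : 0 < a + ε * b := by positivity
    have hder : HasDerivAt g (1 + ε * (b / a))⁻¹ p :=
      HasDerivAt.of_local_left_inverse hgcont.continuousAt (hF (g p))
        (hFpos (g p)).ne' (Eventually.of_forall hFg)
    have heq : (1 + ε * (b / a))⁻¹ = a / (a + ε * b) := by
      field_simp
    refine ⟨heq ▸ hder, div_nonneg hapos.le hdenpos.le, ?_⟩
    rw [div_le_one hdenpos]
    nlinarith
  refine ⟨hmain, ?_, ?_⟩
  · have : g = ⇑e.symm := funext hge
    rw [this]
    exact e.symm.monotone
  · apply lipschitzWith_of_nnnorm_deriv_le (fun p => (hmain p).1.differentiableAt)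
    intro p
    rw [(hmain p).1.deriv, ← NNReal.coe_le_coe, coe_nnnorm, NNReal.coe_one,
      Real.norm_eq_abs]
    exact abs_le.mpr ⟨by linarith [(hmain p).2.1], (hmain p).2.2⟩
end

section
/- For the Kullback-Leibler entropy φ(p) = ρ(p log p - p + 1) with ρ > 0 (and φ(0)=ρ, φ(p)=+∞ for p<0), the Legendre conjugate is φ*(q) = ρ(e^{q/ρ} - 1), and the anisotropic proximity operator is linear: aprox_{φ*}^ε(p) = (1 + ε/ρ)^{-1} p. -/
open Filter Topology

namespace AproxKLAux

lemma real_ub (ρ q p : ℝ) (hρ : 0 < ρ) (hp : 0 ≤ p) :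
    p * q - ρ * (p * Real.log p - p + 1) ≤ ρ * (Real.exp (q / ρ) - 1) := by
  rcases eq_or_lt_of_le hp with h0 | h0
  · rw [← h0]
    simp [Real.log_zero]
    nlinarith [Real.exp_pos (q / ρ)]
  · have hl := Real.add_one_le_exp (q / ρ - Real.log p)
    have he : Real.exp (q / ρ - Real.log p) = Real.exp (q / ρ) / p := by
      rw [Real.exp_sub, Real.exp_log h0]
    rw [he] at hl
    have h2 : (q / ρ - Real.log p + 1) * p ≤ Real.exp (q / ρ) := by
      rw [← le_div_iff₀ h0]; linarith
    have h3 : ρ * ((q / ρ - Real.log p + 1) * p) ≤ ρ * Real.exp (q / ρ) :=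
      mul_le_mul_of_nonneg_left h2 hρ.le
    have h5 : ρ * (q / ρ) * p = q * p := by rw [mul_div_cancel₀ q hρ.ne']
    nlinarith [h3, h5]

lemma key (ρ : ℝ) (hρ : 0 < ρ) (q : ℝ) :
    entConj (fun p => if p < 0 then (⊤ : EReal)
        else ((ρ * (p * Real.log p - p + 1) : ℝ) : EReal)) q
      = ((ρ * (Real.exp (q / ρ) - 1) : ℝ) : EReal) := by
  unfold entConj
  apply le_antisymm
  · apply iSup_le
    rintro ⟨p, hp⟩
    simp only [if_neg (not_lt.mpr hp)]
    rw [← EReal.coe_sub]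
    exact EReal.coe_le_coe_iff.mpr (real_ub ρ q p hρ hp)
  · have hp0 : (0 : ℝ) ≤ Real.exp (q / ρ) := (Real.exp_pos _).le
    set f : {p : ℝ // 0 ≤ p} → EReal := fun p => (((p.1 * q : ℝ) : EReal) -
        if p.1 < 0 then (⊤ : EReal) else ((ρ * (p.1 * Real.log p.1 - p.1 + 1) : ℝ) : EReal))
      with hf
    have hle := le_iSup f ⟨Real.exp (q / ρ), hp0⟩
    refine le_trans (le_of_eq ?_) hle
    rw [hf]
    simp only
    simp only [if_neg (not_lt.mpr hp0)]
    rw [← EReal.coe_sub, EReal.coe_eq_coe_iff, Real.log_exp]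
    field_simp
    ring

lemma aux_le (ρ ε c a b : ℝ) (hρ : 0 < ρ) (hε : 0 < ε)
    (hab : ε * a + ρ * b = (ε + ρ) * c) :
    (ε + ρ) * Real.exp c ≤ ε * Real.exp a + ρ * Real.exp b := by
  have e1 : Real.exp (a - c) * Real.exp c = Real.exp a := by
    rw [← Real.exp_add]; ring_nf
  have e2 : Real.exp (b - c) * Real.exp c = Real.exp b := by
    rw [← Real.exp_add]; ring_nf
  have ha : Real.exp c * (a - c + 1) ≤ Real.exp a := by
    nlinarith [Real.add_one_le_exp (a - c), Real.exp_pos c]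
  have hb : Real.exp c * (b - c + 1) ≤ Real.exp b := by
    nlinarith [Real.add_one_le_exp (b - c), Real.exp_pos c]
  have hsum : ε * (Real.exp c * (a - c + 1)) + ρ * (Real.exp c * (b - c + 1))
      = (ε + ρ) * Real.exp c := by linear_combination Real.exp c * hab
  nlinarith [mul_le_mul_of_nonneg_left ha hε.le, mul_le_mul_of_nonneg_left hb hρ.le]

lemma aux_lt (ρ ε c a b : ℝ) (hρ : 0 < ρ) (hε : 0 < ε)
    (hab : ε * a + ρ * b = (ε + ρ) * c) (hbc : b ≠ c) :
    (ε + ρ) * Real.exp c < ε * Real.exp a + ρ * Real.exp b := by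
  have e1 : Real.exp (a - c) * Real.exp c = Real.exp a := by
    rw [← Real.exp_add]; ring_nf
  have e2 : Real.exp (b - c) * Real.exp c = Real.exp b := by
    rw [← Real.exp_add]; ring_nf
  have ha : Real.exp c * (a - c + 1) ≤ Real.exp a := by
    nlinarith [Real.add_one_le_exp (a - c), Real.exp_pos c]
  have hb : Real.exp c * (b - c + 1) < Real.exp b := by
    nlinarith [Real.add_one_lt_exp (sub_ne_zero.mpr hbc), Real.exp_pos c]
  have hsum : ε * (Real.exp c * (a - c + 1)) + ρ * (Real.exp c * (b - c + 1))
      = (ε + ρ) * Real.exp c := by linear_combination Real.exp c * hab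
  nlinarith [mul_le_mul_of_nonneg_left ha hε.le, mul_lt_mul_of_pos_left hb hρ]

lemma main_le (ρ ε p r : ℝ) (hρ : 0 < ρ) (hε : 0 < ε) :
    ε * Real.exp ((p - (1 + ε / ρ)⁻¹ * p) / ε) + ρ * (Real.exp ((1 + ε / ρ)⁻¹ * p / ρ) - 1)
      ≤ ε * Real.exp ((p - r) / ε) + ρ * (Real.exp (r / ρ) - 1) := by
  have hρε : (0 : ℝ) < ρ + ε := by linarith
  have h1 : (0 : ℝ) < 1 + ε / ρ := by positivity
  have hc1 : (p - (1 + ε / ρ)⁻¹ * p) / ε = p / (ρ + ε) := by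
    field_simp
    ring
  have hc2 : (1 + ε / ρ)⁻¹ * p / ρ = p / (ρ + ε) := by
    field_simp
  have hab : ε * ((p - r) / ε) + ρ * (r / ρ) = (ε + ρ) * (p / (ρ + ε)) := by
    field_simp
    ring
  rw [hc1, hc2]
  have h := aux_le ρ ε (p / (ρ + ε)) ((p - r) / ε) (r / ρ) hρ hε hab
  nlinarith [h]

lemma main_lt (ρ ε p r : ℝ) (hρ : 0 < ρ) (hε : 0 < ε) (hr : r ≠ (1 + ε / ρ)⁻¹ * p) :
    ε * Real.exp ((p - (1 + ε / ρ)⁻¹ * p) / ε) + ρ * (Real.exp ((1 + ε / ρ)⁻¹ * p / ρ) - 1)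
      < ε * Real.exp ((p - r) / ε) + ρ * (Real.exp (r / ρ) - 1) := by
  have hρε : (0 : ℝ) < ρ + ε := by linarith
  have h1 : (0 : ℝ) < 1 + ε / ρ := by positivity
  have hc1 : (p - (1 + ε / ρ)⁻¹ * p) / ε = p / (ρ + ε) := by
    field_simp
    ring
  have hc2 : (1 + ε / ρ)⁻¹ * p / ρ = p / (ρ + ε) := by
    field_simp
  have hab : ε * ((p - r) / ε) + ρ * (r / ρ) = (ε + ρ) * (p / (ρ + ε)) := by
    field_simp
    ring
  have hbc : r / ρ ≠ p / (ρ + ε) := by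
    intro h
    apply hr
    have : r = ρ * (p / (ρ + ε)) := by
      field_simp at h
      field_simp
      linarith [h]
    rw [this, ← hc2]
    field_simp
  rw [hc1, hc2]
  have h := aux_lt ρ ε (p / (ρ + ε)) ((p - r) / ε) (r / ρ) hρ hε hab hbc
  nlinarith [h]

end AproxKLAux

/-- Kullback-Leibler: for `φ(p) = ρ(p log p - p + 1)` (with `φ(0) = ρ`, `φ = ∞` on
`p < 0`), the conjugate is `φ*(q) = ρ(e^{q/ρ} - 1)` and the anisotropic proximity
operator is linear: `(1 + ε/ρ)⁻¹ p` is the unique minimizer of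
`q ↦ ε·exp((p-q)/ε) + φ*(q)`. -/
theorem aprox_KL (ρ ε : ℝ) (hρ : 0 < ρ) (hε : 0 < ε) :
    let φ : ℝ → EReal := fun p =>
      if p < 0 then ⊤ else ((ρ * (p * Real.log p - p + 1) : ℝ) : EReal)
    (∀ q : ℝ, entConj φ q = ((ρ * (Real.exp (q / ρ) - 1) : ℝ) : EReal)) ∧
    ∀ p : ℝ,
      (∀ r : ℝ,
        ((ε * Real.exp ((p - (1 + ε / ρ)⁻¹ * p) / ε) : ℝ) : EReal)
            + entConj φ ((1 + ε / ρ)⁻¹ * p) ≤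
          ((ε * Real.exp ((p - r) / ε) : ℝ) : EReal) + entConj φ r) ∧
      (∀ m : ℝ, (∀ r : ℝ, ((ε * Real.exp ((p - m) / ε) : ℝ) : EReal) + entConj φ m ≤
          ((ε * Real.exp ((p - r) / ε) : ℝ) : EReal) + entConj φ r) →
        m = (1 + ε / ρ)⁻¹ * p) := by
  intro φ
  have keyφ : ∀ q : ℝ, entConj φ q = ((ρ * (Real.exp (q / ρ) - 1) : ℝ) : EReal) :=
    fun q => AproxKLAux.key ρ hρ q
  refine ⟨keyφ, fun p => ⟨fun r => ?_, fun m hm => ?_⟩⟩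
  · rw [keyφ, keyφ, ← EReal.coe_add, ← EReal.coe_add]
    exact EReal.coe_le_coe_iff.mpr (AproxKLAux.main_le ρ ε p r hρ hε)
  · by_contra hne
    have h1 := hm ((1 + ε / ρ)⁻¹ * p)
    rw [keyφ, keyφ, ← EReal.coe_add, ← EReal.coe_add, EReal.coe_le_coe_iff] at h1
    have h2 := AproxKLAux.main_lt ρ ε p m hρ hε hne
    linarith
end

section
/- For the total variation entropy φ(p) = ρ|p-1| (ρ > 0, with φ(p)=+∞ for p<0), the Legendre conjugate is φ*(q) = max(-ρ, q) for q ≤ ρ and φ*(q) = +∞ for q > ρ, and the anisotropic proximity operator equals the clamp to [-ρ, ρ]: aprox_{φ*}^ε(p) = min(max(p, -ρ), ρ). -/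
open Filter Topology

lemma tv_conj (ρ : ℝ) (hρ : 0 < ρ) (q : ℝ) :
    entConj (fun p => if p < 0 then ⊤ else ((ρ * |p - 1| : ℝ) : EReal)) q
      = if q ≤ ρ then ((max (-ρ) q : ℝ) : EReal) else ⊤ := by
  unfold entConj
  split_ifs with hq
  · apply le_antisymm
    · apply iSup_le
      rintro ⟨p, hp⟩
      simp only [not_lt.2 hp, if_false]
      rw [← EReal.coe_sub, EReal.coe_le_coe_iff]
      rcases abs_cases (p - 1) with ⟨h1, h2⟩ | ⟨h1, h2⟩ <;> rw [h1] <;>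
        rcases max_cases (-ρ) q with ⟨h3, h4⟩ | ⟨h3, h4⟩ <;> rw [h3] <;>
        nlinarith [mul_nonneg hp (sub_nonneg.2 hq), mul_nonneg hp hρ.le,
          mul_nonneg hp hp]
    · rcases le_total (-ρ) q with h | h
      · have hmx : max (-ρ) q = q := max_eq_right h
        rw [hmx]
        have hle := le_iSup (fun p : {p : ℝ // 0 ≤ p} =>
            (((p.1 * q : ℝ) : EReal) - (if p.1 < (0:ℝ) then (⊤:EReal) else ((ρ * |p.1 - 1| : ℝ) : EReal))))
          ⟨1, zero_le_one⟩
        refine le_trans (le_of_eq ?_) hle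
        rw [if_neg (by norm_num : ¬(1:ℝ) < 0), ← EReal.coe_sub]
        exact EReal.coe_eq_coe_iff.2 (by norm_num)
      · have hmx : max (-ρ) q = -ρ := max_eq_left h
        rw [hmx]
        have hle := le_iSup (fun p : {p : ℝ // 0 ≤ p} =>
            (((p.1 * q : ℝ) : EReal) - (if p.1 < (0:ℝ) then (⊤:EReal) else ((ρ * |p.1 - 1| : ℝ) : EReal))))
          ⟨0, le_refl 0⟩
        refine le_trans (le_of_eq ?_) hle
        rw [if_neg (by norm_num : ¬(0:ℝ) < 0), ← EReal.coe_sub]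
        exact EReal.coe_eq_coe_iff.2 (by norm_num)
  · push_neg at hq
    rw [iSup_eq_top]
    intro b hb
    obtain ⟨x, hbx, -⟩ := EReal.exists_between_coe_real hb
    set p : ℝ := max 1 ((x - ρ) / (q - ρ) + 1) with hpdef
    have hp1 : 1 ≤ p := le_max_left _ _
    have hp0 : (0:ℝ) ≤ p := by linarith
    refine ⟨⟨p, hp0⟩, ?_⟩
    have hval : p * q - ρ * |p - 1| = p * (q - ρ) + ρ := by
      rw [abs_of_nonneg (by linarith : (0:ℝ) ≤ p - 1)]; ring
    have hqρ : 0 < q - ρ := by linarith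
    have hxlt : x < p * (q - ρ) + ρ := by
      have h2 : (x - ρ) / (q - ρ) + 1 ≤ p := le_max_right _ _
      have h3 : ((x - ρ) / (q - ρ) + 1) * (q - ρ) ≤ p * (q - ρ) :=
        mul_le_mul_of_nonneg_right h2 hqρ.le
      have h4 : ((x - ρ) / (q - ρ) + 1) * (q - ρ) = x - ρ + (q - ρ) := by
        field_simp
      nlinarith
    simp only [not_lt.2 hp0, if_false]
    rw [← EReal.coe_sub]
    calc b < (x : EReal) := hbx
    _ < ((p * q - ρ * |p - 1| : ℝ) : EReal) := by
        rw [EReal.coe_lt_coe_iff, hval]; exact hxlt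

lemma tv_key (ρ ε p r : ℝ) (hρ : 0 < ρ) (hε : 0 < ε) (hr : r ≤ ρ)
    (hne : r ≠ min (max p (-ρ)) ρ) :
    ε * Real.exp ((p - min (max p (-ρ)) ρ) / ε) + min (max p (-ρ)) ρ
      < ε * Real.exp ((p - r) / ε) + max (-ρ) r := by
  have hmr : r ≤ max (-ρ) r := le_max_right _ _
  rcases lt_or_ge p (-ρ) with hp | hp
  · -- c = -ρ
    have hcv : min (max p (-ρ)) ρ = -ρ := by
      rw [max_eq_right hp.le, min_eq_left (by linarith)]
    rw [hcv] at hne ⊢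
    rcases lt_or_ge r (-ρ) with hr2 | hr2
    · have : max (-ρ) r = -ρ := max_eq_left hr2.le
      rw [this]
      have : Real.exp ((p - (-ρ)) / ε) < Real.exp ((p - r) / ε) :=
        Real.exp_lt_exp.2 (by apply div_lt_div_of_pos_right _ hε; linarith)
      nlinarith
    · have hr3 : -ρ < r := lt_of_le_of_ne hr2 (Ne.symm (by simpa using hne))
      have hmax : max (-ρ) r = r := max_eq_right hr2
      rw [hmax]
      set a := Real.exp ((p - (-ρ)) / ε) with ha
      set b := Real.exp (-(r + ρ) / ε) with hb
      have hsplit : Real.exp ((p - r) / ε) = a * b := by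
        rw [ha, hb, ← Real.exp_add]; ring_nf
      have ha1 : a < 1 := by
        rw [ha]
        apply Real.exp_lt_one_iff.2
        apply div_neg_of_neg_of_pos _ hε
        linarith
      have ha0 : 0 < a := Real.exp_pos _
      have hbgt : -(r + ρ) / ε + 1 < b := Real.add_one_lt_exp (by
        apply ne_of_lt
        apply div_neg_of_neg_of_pos _ hε
        linarith)
      have hb' : -(r + ρ) + ε < ε * b := by
        have := mul_lt_mul_of_pos_left hbgt hε
        rw [mul_add, mul_one, mul_div_cancel₀ _ hε.ne'] at this
        linarith
      have hb1 : b < 1 := by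
        rw [hb]
        apply Real.exp_lt_one_iff.2
        apply div_neg_of_neg_of_pos _ hε
        linarith
      have hprod : 0 < (1 - a) * (ε - ε * b) :=
        mul_pos (by linarith) (by nlinarith)
      rw [hsplit]
      nlinarith
  · rcases le_or_gt p ρ with hp2 | hp2
    · -- c = p
      have hcv : min (max p (-ρ)) ρ = p := by
        rw [max_eq_left hp, min_eq_left hp2]
      rw [hcv] at hne ⊢
      have h0 : (p - p) / ε = 0 := by rw [sub_self, zero_div]
      rw [h0, Real.exp_zero, mul_one]
      have hne' : (p - r) / ε ≠ 0 := by
        intro h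
        apply hne
        field_simp at h
        linarith
      have h1 : (p - r) / ε + 1 < Real.exp ((p - r) / ε) := Real.add_one_lt_exp hne'
      have h2 : p - r + ε < ε * Real.exp ((p - r) / ε) := by
        have := mul_lt_mul_of_pos_left h1 hε
        rw [mul_add, mul_one, mul_div_cancel₀ _ hε.ne'] at this
        linarith
      linarith
    · -- c = ρ
      have hcv : min (max p (-ρ)) ρ = ρ := by
        rw [max_eq_left (by linarith), min_eq_right hp2.le]
      rw [hcv] at hne ⊢
      have hrρ : r < ρ := lt_of_le_of_ne hr hne
      set a := Real.exp ((p - ρ) / ε) with ha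
      set b := Real.exp ((ρ - r) / ε) with hb
      have hsplit : Real.exp ((p - r) / ε) = a * b := by
        rw [ha, hb, ← Real.exp_add]; ring_nf
      have ha1 : 1 ≤ a := Real.one_le_exp (div_nonneg (by linarith) hε.le)
      have hbgt : (ρ - r) / ε + 1 < b :=
        Real.add_one_lt_exp (ne_of_gt (div_pos (by linarith) hε))
      have hb' : ρ - r + ε < ε * b := by
        have := mul_lt_mul_of_pos_left hbgt hε
        rw [mul_add, mul_one, mul_div_cancel₀ _ hε.ne'] at this
        linarith
      have hprod : 0 ≤ (a - 1) * (ε * b - ε) :=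
        mul_nonneg (by linarith) (by linarith)
      rw [hsplit]
      nlinarith

/-- Total variation: for `φ(p) = ρ|p-1|` (`φ = ∞` on `p < 0`), the conjugate is
`φ*(q) = max(-ρ, q)` for `q ≤ ρ` and `+∞` otherwise, and the anisotropic proximity
operator is the clamp to `[-ρ, ρ]`: `min (max p (-ρ)) ρ` is the unique minimizer of
`q ↦ ε·exp((p-q)/ε) + φ*(q)`. -/
theorem aprox_TV (ρ ε : ℝ) (hρ : 0 < ρ) (hε : 0 < ε) :
    let φ : ℝ → EReal := fun p => if p < 0 then ⊤ else ((ρ * |p - 1| : ℝ) : EReal)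
    (∀ q : ℝ, entConj φ q = if q ≤ ρ then ((max (-ρ) q : ℝ) : EReal) else ⊤) ∧
    ∀ p : ℝ,
      (∀ r : ℝ,
        ((ε * Real.exp ((p - min (max p (-ρ)) ρ) / ε) : ℝ) : EReal)
            + entConj φ (min (max p (-ρ)) ρ) ≤
          ((ε * Real.exp ((p - r) / ε) : ℝ) : EReal) + entConj φ r) ∧
      (∀ m : ℝ, (∀ r : ℝ, ((ε * Real.exp ((p - m) / ε) : ℝ) : EReal) + entConj φ m ≤
          ((ε * Real.exp ((p - r) / ε) : ℝ) : EReal) + entConj φ r) →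
        m = min (max p (-ρ)) ρ) := by
  intro φ
  have hconj : ∀ q : ℝ, entConj φ q = if q ≤ ρ then ((max (-ρ) q : ℝ) : EReal) else ⊤ :=
    fun q => tv_conj ρ hρ q
  refine ⟨hconj, fun p => ?_⟩
  have hcρ : min (max p (-ρ)) ρ ≤ ρ := min_le_right _ _
  have hcρ' : -ρ ≤ min (max p (-ρ)) ρ := le_min (le_max_right _ _) (by linarith)
  have hEc : entConj φ (min (max p (-ρ)) ρ) = ((min (max p (-ρ)) ρ : ℝ) : EReal) := by
    rw [hconj, if_pos hcρ, max_eq_right hcρ']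
  constructor
  · intro r
    rw [hEc]
    rcases le_or_gt r ρ with hr | hr
    · rw [hconj, if_pos hr, ← EReal.coe_add, ← EReal.coe_add, EReal.coe_le_coe_iff]
      rcases eq_or_ne r (min (max p (-ρ)) ρ) with rfl | hne
      · rw [max_eq_right hcρ']
      · exact (tv_key ρ ε p r hρ hε hr hne).le
    · rw [hconj, if_neg (not_le.2 hr), EReal.coe_add_top]
      exact le_top
  · intro m hm
    by_contra hne
    have hmρ : m ≤ ρ := by
      by_contra hmρ
      have h := hm (min (max p (-ρ)) ρ)
      rw [hconj m, if_neg hmρ, hEc, EReal.coe_add_top, ← EReal.coe_add, top_le_iff] at h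
      exact EReal.coe_ne_top _ h
    have h := hm (min (max p (-ρ)) ρ)
    rw [hconj m, if_pos hmρ, hEc, ← EReal.coe_add, ← EReal.coe_add,
      EReal.coe_le_coe_iff] at h
    have hkey := tv_key ρ ε p m hρ hε hmρ hne
    linarith
end

section
/- Define z(p) = ρ(1-r) - ε(1-r)·W(Δ(p)) with Δ(p) = (ρ/ε)·exp((-p + ρ(1-r))/(ε(1-r))), where W is the Lambert W function, ρ, ε > 0 and r < 1. Then z is differentiable with z'(p) = W(Δ(p)) / (1 + W(Δ(p))), and in particular 0 ≤ z'(p) < 1: z is non-decreasing and 1-Lipschitz. -/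
open Filter Topology

/-- Let `z(p) = ρ(1-r) - ε(1-r)·W(Δ(p))` with `Δ(p) = (ρ/ε)·exp((-p + ρ(1-r))/(ε(1-r)))`,
where `W` is the Lambert function. Then `z` is differentiable with
`z'(p) = W(Δ(p)) / (1 + W(Δ(p))) ∈ [0, 1)`: `z` is non-decreasing and 1-Lipschitz. -/
theorem aprox_power_lipschitz (ρ ε r : ℝ) (hρ : 0 < ρ) (hε : 0 < ε) (hr : r < 1)
    (W : ℝ → ℝ) (hW : ∀ x : ℝ, 0 ≤ x → W x * Real.exp (W x) = x)
    (hWnonneg : ∀ x : ℝ, 0 ≤ x → 0 ≤ W x)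
    (hW' : ∀ x : ℝ, 0 < x → HasDerivAt W (W x / (x * (1 + W x))) x) :
    let Δ : ℝ → ℝ := fun p => (ρ / ε) * Real.exp ((-p + ρ * (1 - r)) / (ε * (1 - r)))
    let z : ℝ → ℝ := fun p => ρ * (1 - r) - ε * (1 - r) * W (Δ p)
    (∀ p, HasDerivAt z (W (Δ p) / (1 + W (Δ p))) p ∧
      0 ≤ W (Δ p) / (1 + W (Δ p)) ∧ W (Δ p) / (1 + W (Δ p)) < 1) ∧
    Monotone z ∧ LipschitzWith 1 z := by
  intro Δ z
  have h1r : (0:ℝ) < 1 - r := by linarith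
  have hden : (0:ℝ) < ε * (1 - r) := mul_pos hε h1r
  have hΔpos : ∀ p, 0 < Δ p := fun p =>
    mul_pos (div_pos hρ hε) (Real.exp_pos _)
  have key : ∀ p, HasDerivAt z (W (Δ p) / (1 + W (Δ p))) p ∧
      0 ≤ W (Δ p) / (1 + W (Δ p)) ∧ W (Δ p) / (1 + W (Δ p)) < 1 := by
    intro p
    have hWp : 0 ≤ W (Δ p) := hWnonneg _ (hΔpos p).le
    have h1W : (0:ℝ) < 1 + W (Δ p) := by linarith
    have hΔ' : HasDerivAt Δ (Δ p * (-1 / (ε * (1 - r)))) p := by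
      have hinner : HasDerivAt (fun p : ℝ => (-p + ρ * (1 - r)) / (ε * (1 - r)))
          (-1 / (ε * (1 - r))) p := by
        have := ((hasDerivAt_id p).neg.add_const (ρ * (1 - r))).div_const (ε * (1 - r))
        simpa using this
      have := (hinner.exp).const_mul (ρ / ε)
      convert this using 1
      show Δ p * (-1 / (ε * (1 - r))) = _
      simp only [Δ]
      ring
      all_goals rfl
    have hWderiv := (hW' (Δ p) (hΔpos p)).comp p hΔ'
    have hzderiv : HasDerivAt z
        (-(ε * (1 - r) * (W (Δ p) / (Δ p * (1 + W (Δ p))) * (Δ p * (-1 / (ε * (1 - r))))))) p := by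
      exact ((hasDerivAt_const p (ρ * (1 - r))).sub ((hWderiv.const_mul (ε * (1 - r))))).congr_deriv (zero_sub _)
    have heq : -(ε * (1 - r) * (W (Δ p) / (Δ p * (1 + W (Δ p))) * (Δ p * (-1 / (ε * (1 - r))))))
        = W (Δ p) / (1 + W (Δ p)) := by
      field_simp
      rw [mul_div_cancel_right₀ _ (hΔpos p).ne']
    refine ⟨heq ▸ hzderiv, div_nonneg hWp h1W.le, ?_⟩
    rw [div_lt_one h1W]; linarith
  refine ⟨key, ?_, ?_⟩
  all_goals
    have hdiff : Differentiable ℝ z := fun p => ((key p).1).differentiableAt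
    have hderiveq : ∀ p, deriv z p = W (Δ p) / (1 + W (Δ p)) := fun p => (key p).1.deriv
  · exact monotone_of_deriv_nonneg hdiff (fun p => by rw [hderiveq]; exact (key p).2.1)
  · apply lipschitzWith_of_nnnorm_deriv_le hdiff
    intro p
    rw [← NNReal.coe_le_coe, coe_nnnorm, Real.norm_eq_abs, hderiveq,
      abs_of_nonneg (key p).2.1]
    exact (key p).2.2.le
end

section
/- Let X be a compact metric space, α a finite non-zero positive Borel measure, ε > 0, and f ∈ C(X). If 0 < ε and α is a probability measure, then Smin_α(f) = -ε·log ∫ exp(-f/ε) dα converges, as ε → 0, to min_{x ∈ supp(α)} f(x), and, as ε → ∞, to ∫ f dα. -/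
open Filter Topology MeasureTheory

/-- The Softmin operator `Smin_α(f) = -ε log ∫ exp(-f/ε) dα`. -/
noncomputable def softmin {X : Type*} [MeasurableSpace X] (ε : ℝ)
    (α : Measure X) (f : X → ℝ) : ℝ :=
  -ε * Real.log (∫ x, Real.exp (-f x / ε) ∂α)

set_option maxHeartbeats 1000000 in
/-- For a probability measure `α` on a compact metric space and continuous `f`,
the Softmin interpolates between the minimum of `f` over the support of `α`
(as `ε → 0⁺`) and the mean `∫ f dα` (as `ε → ∞`). -/
theorem softmin_interpolates {X : Type*} [MetricSpace X] [CompactSpace X]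
    [MeasurableSpace X] [BorelSpace X]
    (α : Measure X) [IsProbabilityMeasure α] (f : X → ℝ) (hf : Continuous f) :
    Tendsto (fun ε : ℝ => softmin ε α f) (𝓝[>] 0)
      (𝓝 (sInf (f '' {x : X | ∀ U ∈ 𝓝 x, 0 < α U}))) ∧
    Tendsto (fun ε : ℝ => softmin ε α f) atTop (𝓝 (∫ x, f x ∂α)) := by
  -- basic setup
  have hint : ∀ g : X → ℝ, Continuous g → Integrable g α := fun g hg =>
    integrableOn_univ.mp (hg.continuousOn.integrableOn_compact isCompact_univ)
  obtain ⟨M, hM⟩ : ∃ M, ∀ x ∈ (Set.univ : Set X), ‖f x‖ ≤ M :=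
    isCompact_univ.exists_bound_of_continuousOn hf.continuousOn
  have hMb : ∀ x, |f x| ≤ M := fun x => hM x (Set.mem_univ x)
  set S : Set X := {x : X | ∀ U ∈ 𝓝 x, 0 < α U} with hS
  have hSeq : S = α.everywherePosSubset Set.univ := by
    ext x
    simp [hS, Measure.everywherePosSubset, nhdsWithin_univ]
  have hae : S =ᵐ[α] Set.univ := by
    have h := Measure.everywherePosSubset_ae_eq (μ := α) (MeasurableSet.univ (α := X))
    rwa [← hSeq] at h
  have haeS : ∀ᵐ x ∂α, x ∈ S := by
    have h2 : α (Set.univ \ S) = 0 := (MeasureTheory.ae_eq_set.mp hae).2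
    rw [← Set.compl_eq_univ_diff] at h2
    exact MeasureTheory.mem_ae_iff.mpr h2
  have hSne : S.Nonempty := by
    apply MeasureTheory.nonempty_of_measure_ne_zero (μ := α)
    have h3 : α S = α Set.univ := measure_congr hae
    simp [h3]
  have hSclosed : IsClosed S := by
    obtain ⟨u, hu, huS⟩ := Measure.exists_isOpen_everywherePosSubset_eq_diff α Set.univ
    rw [hSeq, huS, ← Set.compl_eq_univ_diff]
    exact hu.isClosed_compl
  have hScompact : IsCompact S := hSclosed.isCompact
  have hbdd : BddBelow (f '' S) := ⟨-M, by rintro _ ⟨y, _, rfl⟩; linarith [(abs_le.mp (hMb y)).1]⟩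
  obtain ⟨x₀, hx₀S, hx₀min⟩ := hScompact.exists_isMinOn hSne hf.continuousOn
  set m : ℝ := sInf (f '' S) with hm
  have hmx₀ : m = f x₀ := le_antisymm (csInf_le hbdd ⟨x₀, hx₀S, rfl⟩)
    (le_csInf (hSne.image f) (by rintro _ ⟨y, hy, rfl⟩; exact hx₀min hy))
  have hmle : ∀ x ∈ S, m ≤ f x := fun x hx => csInf_le hbdd ⟨x, hx, rfl⟩
  -- integral positivity and upper bound
  set I : ℝ → ℝ := fun ε => ∫ x, Real.exp (-f x / ε) ∂α with hI
  have hIint : ∀ ε : ℝ, Integrable (fun x => Real.exp (-f x / ε)) α := fun ε =>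
    hint _ (Real.continuous_exp.comp ((hf.neg).div_const ε))
  have hIpos : ∀ ε : ℝ, 0 < ε → 0 < I ε := by
    intro ε hε
    have hb : ∀ x, Real.exp (-M / ε) ≤ Real.exp (-f x / ε) := by
      intro x
      apply Real.exp_le_exp.mpr
      apply div_le_div_of_nonneg_right ?_ hε.le
      linarith [(abs_le.mp (hMb x)).2]
    have := integral_mono (integrable_const (Real.exp (-M / ε))) (hIint ε) hb
    simp only [integral_const, measure_univ, probReal_univ, ENNReal.toReal_one, one_smul] at this
    exact lt_of_lt_of_le (Real.exp_pos _) this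
  have hIle : ∀ ε : ℝ, 0 < ε → I ε ≤ Real.exp (-m / ε) := by
    intro ε hε
    have := integral_mono_ae (hIint ε) (integrable_const (Real.exp (-m / ε))) ?_
    · simpa using this
    · filter_upwards [haeS] with x hx
      apply Real.exp_le_exp.mpr
      have := hmle x hx
      apply div_le_div_of_nonneg_right (by linarith) hε.le
  -- lower bound on softmin for all ε > 0
  have hlow : ∀ ε : ℝ, 0 < ε → m ≤ softmin ε α f := by
    intro ε hε
    have h1 : Real.log (I ε) ≤ -m / ε := by
      calc Real.log (I ε) ≤ Real.log (Real.exp (-m / ε)) :=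
        Real.log_le_log (hIpos ε hε) (hIle ε hε)
      _ = -m / ε := Real.log_exp _
    have h2 := mul_le_mul_of_nonpos_left h1 (by linarith : -ε ≤ 0)
    calc m = -ε * (-m / ε) := by field_simp
    _ ≤ -ε * Real.log (I ε) := h2
    _ = softmin ε α f := rfl
  constructor
  · -- ε → 0⁺
    rw [tendsto_order]
    constructor
    · intro a ha
      filter_upwards [self_mem_nhdsWithin] with ε hε
      exact lt_of_lt_of_le ha (hlow ε hε)
    · intro a ha
      set δ : ℝ := a - m with hδ
      have hδpos : 0 < δ := by simp [hδ]; linarith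
      set U : Set X := f ⁻¹' Set.Iio (m + δ / 2) with hU
      have hUopen : IsOpen U := (isOpen_Iio).preimage hf
      have hx₀U : x₀ ∈ U := by
        simp only [hU, Set.mem_preimage, Set.mem_Iio, ← hmx₀]
        linarith
      have hαU : 0 < α U := hx₀S U (hUopen.mem_nhds hx₀U)
      set c : ℝ := (α U).toReal with hc
      have hcpos : 0 < c := ENNReal.toReal_pos hαU.ne' (measure_ne_top α U)
      -- lower bound for integral: I ε ≥ c * exp(-(m+δ/2)/ε)
      have hIlow : ∀ ε : ℝ, 0 < ε → c * Real.exp (-(m + δ / 2) / ε) ≤ I ε := by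
        intro ε hε
        have h1 : ∫ x in U, Real.exp (-(m + δ / 2) / ε) ∂α
            ≤ ∫ x in U, Real.exp (-f x / ε) ∂α := by
          apply setIntegral_mono_on (integrableOn_const (measure_lt_top α U).ne)
            ((hIint ε).integrableOn) (hUopen.measurableSet)
          intro x hx
          apply Real.exp_le_exp.mpr
          have : f x < m + δ / 2 := hx
          apply div_le_div_of_nonneg_right (by linarith) hε.le
        have h2 : ∫ x in U, Real.exp (-(m + δ / 2) / ε) ∂α
            = c * Real.exp (-(m + δ / 2) / ε) := by
          rw [setIntegral_const]; rfl
        have h3 : ∫ x in U, Real.exp (-f x / ε) ∂α ≤ I ε := by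
          apply setIntegral_le_integral (hIint ε)
          filter_upwards with x using (Real.exp_pos _).le
        linarith
      -- eventually: softmin < a
      have htend : Tendsto (fun ε : ℝ => -ε * Real.log c) (𝓝[>] 0) (𝓝 0) := by
        have : Tendsto (fun ε : ℝ => -ε * Real.log c) (𝓝 0) (𝓝 (-0 * Real.log c)) :=
          ((continuous_neg.mul continuous_const).tendsto 0)
        simpa using this.mono_left nhdsWithin_le_nhds
      have hev : ∀ᶠ ε : ℝ in 𝓝[>] 0, -ε * Real.log c < δ / 2 :=
        htend.eventually_lt_const (by linarith)
      filter_upwards [self_mem_nhdsWithin, hev] with ε hε hev'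
      have hε : (0 : ℝ) < ε := hε
      have h1 : Real.log (c * Real.exp (-(m + δ / 2) / ε)) ≤ Real.log (I ε) :=
        Real.log_le_log (by positivity) (hIlow ε hε)
      rw [Real.log_mul hcpos.ne' (Real.exp_pos _).ne', Real.log_exp] at h1
      have h2 := mul_le_mul_of_nonpos_left h1 (by linarith : -ε ≤ 0)
      have h3 : -ε * (Real.log c + -(m + δ / 2) / ε) = -ε * Real.log c + (m + δ / 2) := by
        field_simp; ring
      calc softmin ε α f = -ε * Real.log (I ε) := rfl
      _ ≤ -ε * (Real.log c + -(m + δ / 2) / ε) := h2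
      _ = -ε * Real.log c + (m + δ / 2) := h3
      _ < δ / 2 + (m + δ / 2) := by linarith
      _ = a := by simp [hδ]; ring
  · -- ε → ∞
    -- upper bound: softmin ≤ ∫ f (Jensen)
    have hup : ∀ ε : ℝ, 0 < ε → softmin ε α f ≤ ∫ x, f x ∂α := by
      intro ε hε
      have hj : Real.exp (∫ x, (-f x / ε) ∂α) ≤ ∫ x, Real.exp (-f x / ε) ∂α := by
        have hgi : Integrable (Real.exp ∘ fun x : X => -f x / ε) α :=
          hint _ (Real.continuous_exp.comp ((hf.neg).div_const ε))
        have h0 := convexOn_exp.map_integral_le Real.continuous_exp.continuousOn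
          isClosed_univ (Filter.Eventually.of_forall fun x => Set.mem_univ _)
          (hint _ ((hf.neg).div_const ε)) hgi
        simpa [Function.comp] using h0
      have hIv : ∫ x, (-f x / ε) ∂α = -(∫ x, f x ∂α) / ε := by
        rw [show (fun x => -f x / ε) = fun x => (ε)⁻¹ * (-f x) by funext x; field_simp,
          integral_const_mul, integral_neg]
        field_simp
      rw [hIv] at hj
      have h1 : -(∫ x, f x ∂α) / ε ≤ Real.log (I ε) := by
        rw [← Real.log_exp (-(∫ x, f x ∂α) / ε)]
        exact Real.log_le_log (Real.exp_pos _) hj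
      have h2 := mul_le_mul_of_nonpos_left h1 (by linarith : -ε ≤ 0)
      calc softmin ε α f = -ε * Real.log (I ε) := rfl
      _ ≤ -ε * (-(∫ x, f x ∂α) / ε) := h2
      _ = ∫ x, f x ∂α := by field_simp
    -- lower bound: softmin ≥ ∫ f - M²/ε for ε ≥ M + 1
    have hM0 : 0 ≤ M := le_trans (abs_nonneg _) (hMb hSne.choose)
    have hlow2 : ∀ ε : ℝ, M + 1 ≤ ε → (∫ x, f x ∂α) - M ^ 2 / ε ≤ softmin ε α f := by
      intro ε hεM
      have hε : (0 : ℝ) < ε := by linarith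
      have hexp : ∀ x : X, Real.exp (-f x / ε) ≤ 1 + (-f x / ε) + (-f x / ε) ^ 2 := by
        intro x
        have habs : |(-f x / ε)| ≤ 1 := by
          rw [abs_div, abs_neg, abs_of_pos hε, div_le_one hε]
          linarith [hMb x]
        have := Real.abs_exp_sub_one_sub_id_le habs
        have := (abs_le.mp this).2
        linarith
      have hfi := hint f hf
      have hf2i : Integrable (fun x => f x ^ 2) α := hint _ (by continuity)
      have hIub : I ε ≤ 1 - (∫ x, f x ∂α) / ε + M ^ 2 / ε ^ 2 := by
        have h1 : I ε ≤ ∫ x, (1 + (-f x / ε) + (-f x / ε) ^ 2) ∂α := by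
          apply integral_mono (hIint ε) ?_ hexp
          apply hint
          continuity
        have e1 : ∀ x : X, 1 + (-f x / ε) + (-f x / ε) ^ 2
            = 1 + (ε⁻¹ * (-f x) + (ε ^ 2)⁻¹ * f x ^ 2) := by
          intro x; field_simp; ring
        have i1 : Integrable (fun x : X => ε⁻¹ * -f x) α := (hfi.neg).const_mul _
        have i2 : Integrable (fun x : X => (ε ^ 2)⁻¹ * f x ^ 2) α := hf2i.const_mul _
        have i12 : Integrable (fun x : X => ε⁻¹ * -f x + (ε ^ 2)⁻¹ * f x ^ 2) α := i1.add i2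
        have h2 : ∫ x, (1 + (-f x / ε) + (-f x / ε) ^ 2) ∂α
            = 1 + (ε⁻¹ * (-(∫ x, f x ∂α)) + (ε ^ 2)⁻¹ * ∫ x, f x ^ 2 ∂α) := by
          simp only [e1]
          rw [integral_add (integrable_const 1) i12, integral_add i1 i2,
            integral_const_mul, integral_const_mul, integral_neg]
          simp
        have hf2 : ∫ x, f x ^ 2 ∂α ≤ M ^ 2 := by
          have h4 := integral_mono hf2i (integrable_const (M ^ 2)) (fun x => by
            have h5 := hMb x
            nlinarith [sq_abs (f x), abs_nonneg (f x)])
          simpa using h4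
        have h6 : (∫ x, f x ^ 2 ∂α) / ε ^ 2 ≤ M ^ 2 / ε ^ 2 := by gcongr
        have h7 : ε⁻¹ * (-(∫ x, f x ∂α)) = -((∫ x, f x ∂α) / ε) := by field_simp
        have h8 : (ε ^ 2)⁻¹ * ∫ x, f x ^ 2 ∂α = (∫ x, f x ^ 2 ∂α) / ε ^ 2 := by
          rw [inv_mul_eq_div]
        rw [h2, h7, h8] at h1
        linarith
      have h3 : Real.log (I ε) ≤ -(∫ x, f x ∂α) / ε + M ^ 2 / ε ^ 2 := by
        have h9 := Real.log_le_sub_one_of_pos (hIpos ε hε)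
        have h10 : -(∫ x, f x ∂α) / ε = -((∫ x, f x ∂α) / ε) := neg_div _ _
        linarith
      have h4 := mul_le_mul_of_nonpos_left h3 (by linarith : -ε ≤ 0)
      calc (∫ x, f x ∂α) - M ^ 2 / ε
          = -ε * (-(∫ x, f x ∂α) / ε + M ^ 2 / ε ^ 2) := by field_simp; ring
      _ ≤ -ε * Real.log (I ε) := h4
      _ = softmin ε α f := rfl
    -- squeeze
    apply tendsto_of_tendsto_of_tendsto_of_le_of_le'
      (g := fun ε : ℝ => (∫ x, f x ∂α) - M ^ 2 / ε) (h := fun _ => ∫ x, f x ∂α)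
    · have h11 : Tendsto (fun ε : ℝ => (∫ x, f x ∂α) - M ^ 2 / ε) atTop
          (𝓝 ((∫ x, f x ∂α) - 0)) :=
        tendsto_const_nhds.sub (tendsto_const_nhds.div_atTop tendsto_id)
      simpa using h11
    · exact tendsto_const_nhds
    · filter_upwards [eventually_ge_atTop (M + 1)] with ε hε using hlow2 ε hε
    · filter_upwards [eventually_ge_atTop (M + 1)] with ε hε using hup ε (by linarith)
end
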